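/- Let $(E_n)_{n \geq 1}$ be events with $\mathbf{P}(E_n \text{ i.o.}) = 1$, and let $(F_n)_{n \geq 1}$ be events such that the sigma-algebra generated by all $F_n$ is independent of the sigma-algebra generated by all $E_n$, and $\mathbf{P}(F_n) \geq c > 0$ for all $n > n_0$. Then $\mathbf{P}(E_n \cap F_n \text{ i.o.}) > 0$. -/
import Mathlib


open MeasureTheory ProbabilityTheory Filter ENNReal

/-- Klass's lemma: If `P(E_n i.o.) = 1`, the σ-algebra generated
by the `F_n` is independent of the σ-algebra generated by the `E_n`, and
`P(F_n) ≥ c > 0` for `n > n₀`, then `P(E_n ∩ F_n i.o.) > 0`. -/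
theorem stmt7 {Ω : Type*} [mΩ : MeasurableSpace Ω] (P : Measure Ω)
    [IsProbabilityMeasure P]
    (E F : ℕ → Set Ω)
    (hEmeas : ∀ n, MeasurableSet (E n)) (hFmeas : ∀ n, MeasurableSet (F n))
    (hE : P (Filter.limsup E atTop) = 1)
    (hindep : Indep
      (MeasurableSpace.generateFrom {s : Set Ω | ∃ n, s = E n})
      (MeasurableSpace.generateFrom {s : Set Ω | ∃ n, s = F n}) P)
    (c : ℝ≥0∞) (hc : 0 < c) (n₀ : ℕ)
    (hF : ∀ n, n₀ < n → c ≤ P (F n)) :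
    0 < P (Filter.limsup (fun n => E n ∩ F n) atTop) := by
  classical
  have hindep' := (ProbabilityTheory.Indep_iff _ _ P).1 hindep
  have hgE_le : MeasurableSpace.generateFrom {s : Set Ω | ∃ n, s = E n} ≤ mΩ :=
    MeasurableSpace.generateFrom_le (by rintro s ⟨n, rfl⟩; exact hEmeas n)
  have hEgE : ∀ n, MeasurableSet[MeasurableSpace.generateFrom
      {s : Set Ω | ∃ n, s = E n}] (E n) := fun n =>
    MeasurableSpace.measurableSet_generateFrom ⟨n, rfl⟩
  have hFg : ∀ n, MeasurableSet[MeasurableSpace.generateFrom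
      {s : Set Ω | ∃ n, s = F n}] (F n) :=
    fun n => MeasurableSpace.measurableSet_generateFrom ⟨n, rfl⟩
  -- first-entrance sets
  set D : ℕ → ℕ → Set Ω := fun m n => (⋂ k ∈ Finset.Ico m n, (E k)ᶜ) ∩ E n with hDdef
  have hDsub : ∀ m n, D m n ⊆ E n := fun m n => Set.inter_subset_right
  have hDgE : ∀ m n, MeasurableSet[MeasurableSpace.generateFrom
      {s : Set Ω | ∃ n, s = E n}] (D m n) := fun m n =>
    (MeasurableSet.biInter (Finset.Ico m n : Finset ℕ).countable_toSet
      (fun k _ => (hEgE k).compl)).inter (hEgE n)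
  have hDmeas : ∀ m n, MeasurableSet (D m n) := fun m n => hgE_le _ (hDgE m n)
  -- disjointness
  have hDdisj : ∀ m, (Set.Ici m).PairwiseDisjoint (D m) := by
    intro m
    have key : ∀ a b : ℕ, m ≤ a → a < b → Disjoint (D m a) (D m b) := by
      intro a b ha h
      refine Set.disjoint_left.2 fun ω hωa hωb => ?_
      have hnot : ω ∉ E a := by
        have h1 := hωb.1
        simp only [Set.mem_iInter, Set.mem_compl_iff] at h1
        exact h1 a (Finset.mem_Ico.2 ⟨ha, h⟩)
      exact hnot hωa.2
    intro a ha b hb hab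
    rcases hab.lt_or_gt with h | h
    · exact key a b ha h
    · exact (key b a hb h).symm
  -- union of first-entrance sets is the tail union
  have hDunion : ∀ m, (⋃ n ∈ Set.Ici m, D m n) = ⋃ n ∈ Set.Ici m, E n := by
    intro m
    apply Set.Subset.antisymm
    · exact Set.iUnion₂_mono fun n _ => hDsub m n
    · rintro ω hω
      simp only [Set.mem_iUnion, Set.mem_Ici] at hω ⊢
      obtain ⟨n, hn, hωn⟩ := hω
      have hex : ∃ k, m ≤ k ∧ ω ∈ E k := ⟨n, hn, hωn⟩
      refine ⟨Nat.find hex, (Nat.find_spec hex).1, ?_, (Nat.find_spec hex).2⟩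
      simp only [Set.mem_iInter, Set.mem_compl_iff]
      intro k hk
      rw [Finset.mem_Ico] at hk
      exact fun hωk => Nat.find_min hex hk.2 ⟨hk.1, hωk⟩
  -- tail unions of `E` have full measure
  have htail : ∀ m : ℕ, P (⋃ n ∈ Set.Ici m, E n) = 1 := by
    intro m
    refine le_antisymm prob_le_one ?_
    rw [← hE]
    refine measure_mono ?_
    rw [limsup_eq_iInf_iSup_of_nat]
    exact iInf_le (fun n => ⨆ i ≥ n, E i) m
  -- key estimate
  have hkey : ∀ m : ℕ, n₀ < m → c ≤ P (⋃ n ∈ Set.Ici m, (E n ∩ F n)) := by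
    intro m hm
    have hmeasDF : ∀ n ∈ Set.Ici m, MeasurableSet (D m n ∩ F n) :=
      fun n _ => (hDmeas m n).inter (hFmeas n)
    have hdisjDF : (Set.Ici m).PairwiseDisjoint (fun n => D m n ∩ F n) :=
      fun a ha b hb hab =>
        ((hDdisj m) ha hb hab).mono Set.inter_subset_left Set.inter_subset_left
    calc c = 1 * c := (one_mul c).symm
      _ = P (⋃ n ∈ Set.Ici m, D m n) * c := by rw [hDunion m, htail m]
      _ = (∑' n : Set.Ici m, P (D m ↑n)) * c := by
            rw [measure_biUnion (Set.to_countable _) (hDdisj m)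
              (fun n _ => hDmeas m n)]
      _ = ∑' n : Set.Ici m, P (D m ↑n) * c := by rw [ENNReal.tsum_mul_right]
      _ ≤ ∑' n : Set.Ici m, P (D m ↑n) * P (F ↑n) :=
            ENNReal.tsum_le_tsum fun n =>
              mul_le_mul_right (hF ↑n (lt_of_lt_of_le hm n.2)) _
      _ = ∑' n : Set.Ici m, P (D m ↑n ∩ F ↑n) :=
            tsum_congr fun n => (hindep' _ _ (hDgE m ↑n) (hFg ↑n)).symm
      _ = P (⋃ n ∈ Set.Ici m, (D m n ∩ F n)) :=
            (measure_biUnion (Set.to_countable _) hdisjDF hmeasDF).symm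
      _ ≤ P (⋃ n ∈ Set.Ici m, (E n ∩ F n)) :=
            measure_mono (Set.iUnion₂_mono fun n _ =>
              Set.inter_subset_inter_left _ (hDsub m n))
  -- conclude
  have hmono : Antitone (fun m : ℕ => ⋃ n ∈ Set.Ici m, (E n ∩ F n)) :=
    fun a b hab => Set.biUnion_subset_biUnion_left (Set.Ici_subset_Ici.2 hab)
  have hlim : Filter.limsup (fun n => E n ∩ F n) atTop
      = ⋂ m : ℕ, ⋃ n ∈ Set.Ici m, (E n ∩ F n) := by
    rw [limsup_eq_iInf_iSup_of_nat]
    rfl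
  rw [hlim, hmono.measure_iInter
    (fun m => (MeasurableSet.biUnion (Set.to_countable _)
      (fun n _ => (hEmeas n).inter (hFmeas n))).nullMeasurableSet)
    ⟨0, measure_ne_top P _⟩]
  refine lt_of_lt_of_le hc (le_iInf fun m => ?_)
  calc c ≤ P (⋃ n ∈ Set.Ici (max m (n₀ + 1)), (E n ∩ F n)) := hkey _ (by omega)
    _ ≤ P (⋃ n ∈ Set.Ici m, (E n ∩ F n)) :=
          measure_mono (hmono (le_max_left m (n₀ + 1)))
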